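/- Let p ≥ 1 be an integer, c > 0 and t ≥ 0 real numbers, and a₁,…,a_p ≥ 0 real numbers. If c · t^{p+1} ≤ Σ_{i=1}^{p} a_i · t^{i}, then t ≤ 2 · max_{1 ≤ i ≤ p} (a_i / c)^{1/(p+1−i)}. -/

import Mathlib

lemma stmt_4_aux_sum (p : ℕ) :
    ∑ i ∈ Finset.Icc 1 p, ((2:ℝ)⁻¹) ^ (p + 1 - i) = 1 - (2⁻¹ : ℝ) ^ p := by
  induction p with
  | zero => simp
  | succ n ih =>
    rw [Finset.sum_Icc_succ_top (by omega : 1 ≤ n + 1)]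
    have hstep : ∑ i ∈ Finset.Icc 1 n, ((2:ℝ)⁻¹) ^ (n + 1 + 1 - i)
        = 2⁻¹ * ∑ i ∈ Finset.Icc 1 n, ((2:ℝ)⁻¹) ^ (n + 1 - i) := by
      rw [Finset.mul_sum]
      apply Finset.sum_congr rfl
      intro i hi
      simp only [Finset.mem_Icc] at hi
      rw [← pow_succ']
      congr 1
      omega
    rw [hstep, ih]
    simp
    ring

/-- Lagrange-type root bound used to control the step length. -/
theorem stmt_4 (p : ℕ) (hp : 1 ≤ p) (c t : ℝ) (hc : 0 < c) (ht : 0 ≤ t)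
    (a : ℕ → ℝ) (ha : ∀ i ∈ Finset.Icc 1 p, 0 ≤ a i)
    (h : c * t ^ (p + 1) ≤ ∑ i ∈ Finset.Icc 1 p, a i * t ^ i) :
    t ≤ 2 * (Finset.Icc 1 p).sup' (Finset.nonempty_Icc.mpr hp)
        (fun i => (a i / c) ^ ((1 : ℝ) / ((p : ℝ) + 1 - (i : ℝ)))) := by
  set M := (Finset.Icc 1 p).sup' (Finset.nonempty_Icc.mpr hp)
      (fun i => (a i / c) ^ ((1 : ℝ) / ((p : ℝ) + 1 - (i : ℝ)))) with hM
  have h1mem : (1 : ℕ) ∈ Finset.Icc 1 p := Finset.mem_Icc.mpr ⟨le_refl 1, hp⟩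
  have hM0 : 0 ≤ M := le_trans
    (Real.rpow_nonneg (div_nonneg (ha 1 h1mem) hc.le) _)
    (Finset.le_sup' (fun i => (a i / c) ^ ((1 : ℝ) / ((p : ℝ) + 1 - (i : ℝ)))) h1mem)
  by_contra hcon
  push_neg at hcon
  have ht0 : 0 < t := lt_of_le_of_lt (by linarith) hcon
  have hM2 : M ≤ t / 2 := by linarith
  have key : ∀ i ∈ Finset.Icc 1 p,
      a i * t ^ i ≤ c * (t ^ (p + 1) * (2⁻¹ : ℝ) ^ (p + 1 - i)) := by
    intro i hi
    have hi' := Finset.mem_Icc.mp hi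
    have hai := ha i hi
    have hle : (a i / c) ^ ((1 : ℝ) / ((p : ℝ) + 1 - (i : ℝ))) ≤ M :=
      Finset.le_sup' (fun i => (a i / c) ^ ((1 : ℝ) / ((p : ℝ) + 1 - (i : ℝ)))) hi
    have hip : (i : ℝ) ≤ (p : ℝ) := Nat.cast_le.mpr hi'.2
    have he : (0 : ℝ) < (p : ℝ) + 1 - (i : ℝ) := by linarith
    have hbase : 0 ≤ a i / c := div_nonneg hai hc.le
    have h1 : a i / c ≤ M ^ ((p : ℝ) + 1 - (i : ℝ)) := by
      have h2 := Real.rpow_le_rpow (Real.rpow_nonneg hbase _) hle he.le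
      rwa [← Real.rpow_mul hbase, one_div_mul_cancel he.ne', Real.rpow_one] at h2
    have h2 : M ^ ((p : ℝ) + 1 - (i : ℝ)) ≤ (t / 2) ^ ((p : ℝ) + 1 - (i : ℝ)) :=
      Real.rpow_le_rpow hM0 hM2 he.le
    have hcast : ((p : ℝ) + 1 - (i : ℝ)) = ((p + 1 - i : ℕ) : ℝ) := by
      rw [Nat.cast_sub (by omega : i ≤ p + 1)]
      push_cast
      ring
    have h3 : (t / 2) ^ ((p : ℝ) + 1 - (i : ℝ)) = (t / 2) ^ (p + 1 - i) := by
      rw [hcast, Real.rpow_natCast]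
    have h4 : a i ≤ c * (t / 2) ^ (p + 1 - i) := by
      have := (div_le_iff₀ hc).mp (h1.trans (h2.trans_eq h3))
      linarith
    have hpow : (t / 2) ^ (p + 1 - i) * t ^ i = t ^ (p + 1) * (2⁻¹ : ℝ) ^ (p + 1 - i) := by
      have hk : (p + 1 - i) + i = p + 1 := by omega
      calc (t / 2) ^ (p + 1 - i) * t ^ i
          = (t ^ (p + 1 - i) * t ^ i) * (2⁻¹ : ℝ) ^ (p + 1 - i) := by
            rw [div_eq_mul_inv, mul_pow]; ring
        _ = t ^ (p + 1) * (2⁻¹ : ℝ) ^ (p + 1 - i) := by rw [← pow_add, hk]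
    calc a i * t ^ i ≤ (c * (t / 2) ^ (p + 1 - i)) * t ^ i :=
          mul_le_mul_of_nonneg_right h4 (pow_nonneg ht i)
      _ = c * (t ^ (p + 1) * (2⁻¹ : ℝ) ^ (p + 1 - i)) := by rw [mul_assoc, hpow]
  have hsum : c * t ^ (p + 1) ≤ c * t ^ (p + 1) * (1 - (2⁻¹ : ℝ) ^ p) := by
    calc c * t ^ (p + 1) ≤ ∑ i ∈ Finset.Icc 1 p, a i * t ^ i := h
      _ ≤ ∑ i ∈ Finset.Icc 1 p, c * (t ^ (p + 1) * (2⁻¹ : ℝ) ^ (p + 1 - i)) :=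
          Finset.sum_le_sum key
      _ = c * t ^ (p + 1) * ∑ i ∈ Finset.Icc 1 p, (2⁻¹ : ℝ) ^ (p + 1 - i) := by
          rw [Finset.mul_sum]; apply Finset.sum_congr rfl; intro i _; ring
      _ = c * t ^ (p + 1) * (1 - (2⁻¹ : ℝ) ^ p) := by rw [stmt_4_aux_sum]
  have hpos : 0 < c * t ^ (p + 1) := by positivity
  have hq : (0 : ℝ) < (2⁻¹ : ℝ) ^ p := by positivity
  nlinarith
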